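/- Let G be a graph with weight function w : V(G) → ℚ, and let 𝒞̃ be a family of subsets of V(G) such that each C ∈ 𝒞̃ induces a connected bipartite subgraph of G. Assume there exists a set S* ⊆ V(G) such that G[S*] is bipartite, w(S*) is maximum among all subsets of V(G) inducing a bipartite subgraph, and the vertex set of every connected component of G[S*] belongs to 𝒞̃. Let H be the graph with vertex set 𝒞̃ in which distinct C₁, C₂ are adjacent if and only if they touch each other, and define w^blob : 𝒞̃ → ℚ by w^blob(C) = Σ_{u∈C} w(u). Then the maximum of w(S) over all S ⊆ V(G) with G[S] bipartite equals the maximum of Σ_{C∈I} w^blob(C) over all independent sets I of H. -/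

import Mathlib

open SimpleGraph Finset

/-- A finite set of vertices is independent in `G`. -/
def FinsetIndep {V : Type*} (G : SimpleGraph V) (A : Finset V) : Prop :=
  ∀ x ∈ A, ∀ y ∈ A, ¬ G.Adj x y

/-- A finite set of vertices induces a bipartite subgraph of `G`:
it can be partitioned into two independent sets. -/
def IndBipartite {V : Type*} [DecidableEq V] (G : SimpleGraph V) (S : Finset V) : Prop :=
  ∃ A B : Finset V, A ∪ B = S ∧ A ∩ B = ∅ ∧ FinsetIndep G A ∧ FinsetIndep G B

/-- Two vertex subsets touch: they intersect, or some edge of `G` joins them. -/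
def FinsetTouch {V : Type*} [DecidableEq V] (G : SimpleGraph V) (A B : Finset V) : Prop :=
  (A ∩ B).Nonempty ∨ ∃ a ∈ A, ∃ b ∈ B, G.Adj a b

/-- The blob graph on a family `𝒞` of finite vertex subsets of `G`:
distinct sets are adjacent iff they touch each other. -/
def finsetBlobGraph {V : Type*} [DecidableEq V] (G : SimpleGraph V) (𝒞 : Finset (Finset V)) :
    SimpleGraph {C : Finset V // C ∈ 𝒞} where
  Adj C₁ C₂ := C₁ ≠ C₂ ∧ FinsetTouch G (↑C₁) (↑C₂)
  symm := by
    constructor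
    rintro ⟨A, hA⟩ ⟨B, hB⟩ ⟨hne, h⟩
    refine ⟨Ne.symm hne, ?_⟩
    rcases h with h | ⟨a, ha, b, hb, hab⟩
    · exact Or.inl (by rwa [Finset.inter_comm])
    · exact Or.inr ⟨b, hb, a, ha, hab.symm⟩
  loopless := by constructor; rintro ⟨A, hA⟩ ⟨hne, -⟩; exact hne rfl

theorem max_bipartite_weight_eq_max_independent_set_in_blob_graph
    {V : Type*} [Fintype V] [DecidableEq V] (G : SimpleGraph V) (w : V → ℚ)
    (𝒞 : Finset (Finset V))
    (hbip : ∀ C ∈ 𝒞, IndBipartite G C)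
    (hconn : ∀ C ∈ 𝒞, (G.induce (↑C : Set V)).Connected)
    (S : Finset V) (hS : IndBipartite G S)
    (hSmax : ∀ T : Finset V, IndBipartite G T → ∑ v ∈ T, w v ≤ ∑ v ∈ S, w v)
    (hScomp : ∀ c : (G.induce (↑S : Set V)).ConnectedComponent,
      ∃ C ∈ 𝒞, (↑C : Set V) = Subtype.val '' c.supp) :
    ∃ W : ℚ,
      IsGreatest {x : ℚ | ∃ T : Finset V, IndBipartite G T ∧ ∑ v ∈ T, w v = x} W ∧
      IsGreatest {x : ℚ | ∃ I : Finset {C : Finset V // C ∈ 𝒞},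
        (∀ C₁ ∈ I, ∀ C₂ ∈ I, ¬ (finsetBlobGraph G 𝒞).Adj C₁ C₂) ∧
        ∑ C ∈ I, (∑ v ∈ (↑C : Finset V), w v) = x} W := by
  classical
  refine ⟨∑ v ∈ S, w v, ⟨⟨S, hS, rfl⟩, ?_⟩, ?_, ?_⟩
  · rintro x ⟨T, hT, rfl⟩
    exact hSmax T hT
  · -- the value is achieved by the set of components of S
    haveI : Fintype (G.induce (↑S : Set V)).ConnectedComponent := Fintype.ofFinite _
    choose f hf1 hf2 using hScomp
    set g : (G.induce (↑S : Set V)).ConnectedComponent → {C : Finset V // C ∈ 𝒞} :=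
      fun c => ⟨f c, hf1 c⟩ with hg
    have hmem : ∀ c a, a ∈ f c ↔ ∃ x ∈ c.supp, (x : V) = a := by
      intro c a
      rw [← Finset.mem_coe, hf2 c]
      simp [Set.mem_image]
    have hsub : ∀ c, f c ⊆ S := by
      intro c a ha
      rcases (hmem c a).1 ha with ⟨x, -, rfl⟩
      exact Finset.mem_coe.1 x.2
    have hinj : Function.Injective g := by
      intro c₁ c₂ h
      have h2 : ((f c₁ : Finset V) : Set V) = ((f c₂ : Finset V) : Set V) := by
        have := congrArg Subtype.val h
        simp only [hg] at this
        rw [this]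
      rw [hf2, hf2] at h2
      exact ConnectedComponent.supp_injective (Set.image_injective.2 Subtype.val_injective h2)
    have hne_comp : ∀ c₁ c₂, c₁ ≠ c₂ → ¬ FinsetTouch G (f c₁) (f c₂) := by
      intro c₁ c₂ hne htouch
      apply hne
      rcases htouch with ⟨a, ha⟩ | ⟨a, ha, b, hb, hab⟩
      · rw [Finset.mem_inter] at ha
        rcases (hmem c₁ a).1 ha.1 with ⟨x₁, hx₁, hv₁⟩
        rcases (hmem c₂ a).1 ha.2 with ⟨x₂, hx₂, hv₂⟩
        have hx : x₁ = x₂ := Subtype.ext (hv₁.trans hv₂.symm)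
        rw [ConnectedComponent.mem_supp_iff] at hx₁ hx₂
        rw [← hx₁, hx, hx₂]
      · rcases (hmem c₁ a).1 ha with ⟨x₁, hx₁, hv₁⟩
        rcases (hmem c₂ b).1 hb with ⟨x₂, hx₂, hv₂⟩
        have hadj : (G.induce (↑S : Set V)).Adj x₁ x₂ := by
          show G.Adj (x₁ : V) (x₂ : V)
          rw [hv₁, hv₂]; exact hab
        rw [ConnectedComponent.mem_supp_iff] at hx₁ hx₂
        rw [← hx₁, ← hx₂]
        exact ConnectedComponent.sound hadj.reachable
    refine ⟨Finset.univ.image g, ?_, ?_⟩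
    · intro C₁ h₁ C₂ h₂ hadj
      rcases Finset.mem_image.1 h₁ with ⟨c₁, -, rfl⟩
      rcases Finset.mem_image.1 h₂ with ⟨c₂, -, rfl⟩
      exact hne_comp c₁ c₂ (fun h => hadj.1 (congrArg g h)) hadj.2
    · rw [Finset.sum_image (fun c₁ _ c₂ _ h => hinj h)]
      have hdisj : (↑(Finset.univ : Finset (G.induce (↑S : Set V)).ConnectedComponent) :
          Set ((G.induce (↑S : Set V)).ConnectedComponent)).PairwiseDisjoint (fun c => f c) := by
        intro c₁ _ c₂ _ hne
        simp only [Function.onFun]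
        rw [Finset.disjoint_left]
        intro a ha₁ ha₂
        exact hne_comp c₁ c₂ hne (Or.inl ⟨a, Finset.mem_inter.2 ⟨ha₁, ha₂⟩⟩)
      rw [← Finset.sum_biUnion hdisj]
      congr 1
      ext a
      simp only [Finset.mem_biUnion, Finset.mem_univ, true_and]
      constructor
      · rintro ⟨c, hc⟩; exact hsub c hc
      · intro ha
        refine ⟨(G.induce (↑S : Set V)).connectedComponentMk ⟨a, Finset.mem_coe.2 ha⟩, ?_⟩
        exact (hmem _ a).2 ⟨⟨a, Finset.mem_coe.2 ha⟩, (ConnectedComponent.mem_supp_iff _ _).2 rfl, rfl⟩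
  · -- upper bound for blob-graph independent sets
    rintro x ⟨I, hI, rfl⟩
    have hnt : ∀ C₁ ∈ I, ∀ C₂ ∈ I, C₁ ≠ C₂ → ¬ FinsetTouch G (↑C₁) (↑C₂) := by
      intro C₁ h₁ C₂ h₂ hne ht
      exact hI C₁ h₁ C₂ h₂ ⟨hne, ht⟩
    have hdisj : (↑I : Set _).PairwiseDisjoint
        (fun C : {C : Finset V // C ∈ 𝒞} => (C : Finset V)) := by
      intro C₁ h₁ C₂ h₂ hne
      simp only [Function.onFun]
      rw [Finset.disjoint_left]
      intro a ha₁ ha₂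
      exact hnt C₁ (Finset.mem_coe.1 h₁) C₂ (Finset.mem_coe.1 h₂) hne
        (Or.inl ⟨a, Finset.mem_inter.2 ⟨ha₁, ha₂⟩⟩)
    rw [← Finset.sum_biUnion hdisj]
    apply hSmax
    choose A B hABu hABi hAind hBind using fun (C : {C : Finset V // C ∈ 𝒞}) => hbip C.1 C.2
    set T := I.biUnion (fun C => (C : Finset V)) with hT
    have hAT : I.biUnion A ⊆ T := by
      intro a ha
      rcases Finset.mem_biUnion.1 ha with ⟨C, hC, haC⟩
      exact Finset.mem_biUnion.2 ⟨C, hC, by rw [← hABu C]; exact Finset.mem_union_left _ haC⟩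
    refine ⟨I.biUnion A, T \ I.biUnion A, Finset.union_sdiff_of_subset hAT,
      Finset.inter_sdiff_self _ _, ?_, ?_⟩
    · intro a ha b hb hab
      rcases Finset.mem_biUnion.1 ha with ⟨C₁, h₁, ha₁⟩
      rcases Finset.mem_biUnion.1 hb with ⟨C₂, h₂, hb₂⟩
      by_cases hEq : C₁ = C₂
      · subst hEq; exact hAind C₁ a ha₁ b hb₂ hab
      · refine hnt C₁ h₁ C₂ h₂ hEq (Or.inr ⟨a, ?_, b, ?_, hab⟩)
        · rw [← hABu C₁]; exact Finset.mem_union_left _ ha₁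
        · rw [← hABu C₂]; exact Finset.mem_union_left _ hb₂
    · intro a ha b hb hab
      rcases Finset.mem_sdiff.1 ha with ⟨haT, haA⟩
      rcases Finset.mem_sdiff.1 hb with ⟨hbT, hbA⟩
      rcases Finset.mem_biUnion.1 haT with ⟨C₁, h₁, ha₁⟩
      rcases Finset.mem_biUnion.1 hbT with ⟨C₂, h₂, hb₂⟩
      have haB : a ∈ B C₁ := by
        have h : a ∈ A C₁ ∪ B C₁ := by rw [hABu C₁]; exact ha₁
        rcases Finset.mem_union.1 h with h' | h'
        · exact absurd (Finset.mem_biUnion.2 ⟨C₁, h₁, h'⟩) haA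
        · exact h'
      have hbB : b ∈ B C₂ := by
        have h : b ∈ A C₂ ∪ B C₂ := by rw [hABu C₂]; exact hb₂
        rcases Finset.mem_union.1 h with h' | h'
        · exact absurd (Finset.mem_biUnion.2 ⟨C₂, h₂, h'⟩) hbA
        · exact h'
      by_cases hEq : C₁ = C₂
      · subst hEq; exact hBind C₁ a haB b hbB hab
      · exact hnt C₁ h₁ C₂ h₂ hEq (Or.inr ⟨a, ha₁, b, hb₂, hab⟩)
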